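/- Let u1, u2, e1, e2, f1, f2 ∈ ℝ with u2 ≠ 0 and u1 ≠ 2, and suppose: (e1 − 1)·(u1 − e1) + e2·(u2 − e2) = 0; (e1 − 1)² + e2² = 1; u1·f2 − u2·f1 = 0; and f1·e2 − f2·e1 − 2·e2 + 2·f2 = 0. Then (u1 − e1)² + (u2 − e2)² = (u1 − f1)² + (u2 − f2)² if and only if u1 = 0 or u1² + u2² − 2·u1 = 0. (Geometrically: |AE| = |AF| if and only if the point A lies on the y-axis or on the given circle.) -/
import Mathlib


/-- Tangent-from-a-point configuration: with A = (u1,u2) off the x-axis, u1 ≠ 2,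
E a tangency point on the circle centered at (1,0) of radius 1, and F the
intersection of line DE (D = (2,0)) with line CA (C = (0,0)), we have |AE| = |AF|
iff A lies on the y-axis or on the circle. -/
theorem stmt_12 (u1 u2 e1 e2 f1 f2 : ℝ) (hu2 : u2 ≠ 0) (hu1 : u1 ≠ 2)
    (htan : (e1 - 1) * (u1 - e1) + e2 * (u2 - e2) = 0)
    (hcirc : (e1 - 1) ^ 2 + e2 ^ 2 = 1)
    (hCA : u1 * f2 - u2 * f1 = 0)
    (hDE : f1 * e2 - f2 * e1 - 2 * e2 + 2 * f2 = 0) :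
    (u1 - e1) ^ 2 + (u2 - e2) ^ 2 = (u1 - f1) ^ 2 + (u2 - f2) ^ 2 ↔
      u1 = 0 ∨ u1 ^ 2 + u2 ^ 2 - 2 * u1 = 0 := by
  -- the power of the point A: |AE|^2 = u1^2+u2^2-2u1
  have hAE : (u1 - e1) ^ 2 + (u2 - e2) ^ 2 = u1 ^ 2 + u2 ^ 2 - 2 * u1 := by
    linear_combination (-2) * htan - hcirc
  have h3 : e2 * u2 = u1 + e1 * (1 - u1) := by
    linear_combination htan + hcirc
  have he1ne2 : e1 ≠ 2 := by
    intro h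
    subst h
    have he2 : e2 = 0 := by nlinarith [sq_nonneg e2]
    apply hu1
    rw [he2] at htan
    nlinarith
  by_cases he2 : e2 = 0
  · -- degenerate case: E = C = (0,0), forcing u1 = 0, F = (0,0)
    subst he2
    have he1 : e1 = 0 := by
      rcases mul_self_eq_one_iff.mp (by nlinarith : (e1 - 1) * (e1 - 1) = 1) with h | h
      · exact absurd (by linarith) he1ne2
      · linarith
    subst he1
    have hu10 : u1 = 0 := by nlinarith
    subst hu10
    have hf2 : f2 = 0 := by linarith
    have hf1 : f1 = 0 := by
      have h := hCA
      rcases mul_eq_zero.mp (by linarith : u2 * f1 = 0) with h' | h'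
      · exact absurd h' hu2
      · exact h'
    subst hf1; subst hf2
    simp
  · -- main case: D ≠ 0 where D = u1*e2 - u2*e1 + 2*u2
    set D : ℝ := u1 * e2 - u2 * e1 + 2 * u2 with hDdef
    have h2 : f2 * D = 2 * e2 * u2 := by
      linear_combination u2 * hDE + e2 * hCA
    have h1 : f1 * D = 2 * e2 * u1 := by
      linear_combination u1 * hDE + (e1 - 2) * hCA
    have hD : D ≠ 0 := by
      intro h
      rw [h, mul_zero] at h2
      rcases mul_eq_zero.mp h2.symm with h' | h'
      · rcases mul_eq_zero.mp h' with h'' | h''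
        · norm_num at h''
        · exact he2 h''
      · exact hu2 h'
    have key : ((u1 - f1) ^ 2 + (u2 - f2) ^ 2 - (u1 ^ 2 + u2 ^ 2 - 2 * u1)) * D ^ 2
        = -2 * u1 * e1 * (2 - e1) * (u1 ^ 2 + u2 ^ 2 - 2 * u1) := by
      linear_combination (f1 * D + 2 * e2 * u1 - 2 * u1 * D) * h1
        + (f2 * D + 2 * e2 * u2 - 2 * u2 * D) * h2
        + (4 * (e1 - 2) * (u1 ^ 2 + u2 ^ 2) + 4 * u1 ^ 2 * (2 - e1)) * h3
        + (4 * (1 - u1) * (u1 ^ 2 + u2 ^ 2) + 2 * u1 ^ 3) * hcirc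
    rw [hAE]
    constructor
    · intro h
      have hz : -2 * u1 * e1 * (2 - e1) * (u1 ^ 2 + u2 ^ 2 - 2 * u1) = 0 := by
        rw [← key, h]; ring
      have hD2 : (2 : ℝ) - e1 ≠ 0 := fun h' => he1ne2 (by linarith)
      have he10 : e1 ≠ 0 := by
        intro h'
        apply he2
        subst h'
        nlinarith [sq_nonneg e2]
      rcases mul_eq_zero.mp hz with h' | h'
      · left
        by_contra hu0
        exact (mul_ne_zero (mul_ne_zero (mul_ne_zero
          (by norm_num : (-2 : ℝ) ≠ 0) hu0) he10) hD2) h'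
      · exact Or.inr h'
    · intro h
      have hz : ((u1 - f1) ^ 2 + (u2 - f2) ^ 2 - (u1 ^ 2 + u2 ^ 2 - 2 * u1)) * D ^ 2 = 0 := by
        rw [key]
        rcases h with h | h
        · rw [h]; ring
        · rw [h]; ring
      have := (mul_eq_zero.mp hz).resolve_right (pow_ne_zero 2 hD)
      linarith
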